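/- Let K_{n=1}^∞ a_n/1 be a continued fraction with all a_n nonzero complex numbers. Suppose there exist complex numbers α ≠ β such that the even-indexed approximants K_{2n} converge to α and the odd-indexed approximants K_{2n+1} converge to β. Then |a_n| → ∞ as n → ∞. -/

import Mathlib

open Filter Topology

set_option maxHeartbeats 2000000

/-- If the even approximants `K_{2n} = A_{2n}/B_{2n}` of the continued fraction
`K_{n=1}^∞ a n / 1` (all `a n ≠ 0`) converge to `α` and the odd approximants
converge to `β` with `α ≠ β`, then `|a n| → ∞`.
Indexing: `A (n+1)/B (n+1)` is the `n`-th approximant, with `A 0 = 1`, `A 1 = 0`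
(`b₀ = 0`), `B 0 = 0`, `B 1 = 1`. -/
theorem abs_partial_numerators_tendsto_atTop_of_odd_even_parts_differ
    (a A B : ℕ → ℂ) (α β : ℂ)
    (ha : ∀ n, 1 ≤ n → a n ≠ 0)
    (hA0 : A 0 = 1) (hA1 : A 1 = 0) (hB0 : B 0 = 0) (hB1 : B 1 = 1)
    (hA : ∀ n, A (n + 2) = A (n + 1) + a (n + 1) * A n)
    (hB : ∀ n, B (n + 2) = B (n + 1) + a (n + 1) * B n)
    (hαβ : α ≠ β)
    (heven : Tendsto (fun n => A (2 * n + 1) / B (2 * n + 1)) atTop (𝓝 α))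
    (hodd : Tendsto (fun n => A (2 * n + 2) / B (2 * n + 2)) atTop (𝓝 β)) :
    Tendsto (fun n => ‖a n‖) atTop atTop := by
  -- determinants
  set D : ℕ → ℂ := fun m => A (m + 1) * B m - A m * B (m + 1) with hDdef
  have hDrec : ∀ m, D (m + 1) = -a (m + 1) * D m := by
    intro m
    simp only [hDdef, hA m, hB m]
    ring
  have hDne : ∀ m, D m ≠ 0 := by
    intro m
    induction m with
    | zero => simp [hDdef, hA0, hA1, hB0, hB1]
    | succ n ih =>
      rw [hDrec n]
      exact mul_ne_zero (neg_ne_zero.mpr (ha (n + 1) (by omega))) ih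
  have hABne : ∀ m, B m = 0 → A m ≠ 0 := by
    intro m hBm hAm
    exact hDne m (by simp [hDdef, hBm, hAm])
  have hBB : ∀ m, B m = 0 → B (m + 1) ≠ 0 := by
    intro m hBm hBm1
    exact hDne m (by simp [hDdef, hBm, hBm1])
  -- the point c
  set c : ℂ := ((‖α‖ + ‖β‖ + 1 : ℝ) : ℂ) with hcdef
  have hc_norm : ‖c‖ = ‖α‖ + ‖β‖ + 1 := by
    rw [hcdef, Complex.norm_real, Real.norm_eq_abs, abs_of_pos (by positivity)]
  have hcα : 1 ≤ ‖c - α‖ := by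
    have h := norm_sub_norm_le c α
    rw [hc_norm] at h
    linarith [norm_nonneg β]
  have hcβ : 1 ≤ ‖c - β‖ := by
    have h := norm_sub_norm_le c β
    rw [hc_norm] at h
    linarith [norm_nonneg α]
  have hαc : α - c ≠ 0 := by
    intro h
    rw [show c - α = -(α - c) by ring, h] at hcα
    simp at hcα
    linarith
  have hβc : β - c ≠ 0 := by
    intro h
    rw [show c - β = -(β - c) by ring, h] at hcβ
    simp at hcβ
    linarith
  -- the cluster point ξ and constants
  set ξ : ℂ := (β - α) / (β - c) with hξdef
  have hξ0 : ξ ≠ 0 := div_ne_zero (sub_ne_zero.mpr (Ne.symm hαβ)) hβc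
  have h1ξ : (1 : ℂ) - ξ = (α - c) / (β - c) := by
    rw [hξdef]
    field_simp
    ring
  have h1ξ0 : (1 : ℂ) - ξ ≠ 0 := by rw [h1ξ]; exact div_ne_zero hαc hβc
  set δ : ℝ := min (min ‖ξ‖ ‖(1 : ℂ) - ξ‖) 1 / 2 with hδdef
  have hδpos : 0 < δ := by
    have h1 : 0 < ‖ξ‖ := norm_pos_iff.mpr hξ0
    have h2 : 0 < ‖(1 : ℂ) - ξ‖ := norm_pos_iff.mpr h1ξ0
    rw [hδdef]
    have := lt_min (lt_min h1 h2) one_pos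
    linarith
  have h2δξ : 2 * δ ≤ ‖ξ‖ := by
    have h1 := min_le_left (min ‖ξ‖ ‖(1 : ℂ) - ξ‖) 1
    have h2 := min_le_left ‖ξ‖ ‖(1 : ℂ) - ξ‖
    rw [hδdef]; linarith
  have h2δ1ξ : 2 * δ ≤ ‖(1 : ℂ) - ξ‖ := by
    have h1 := min_le_left (min ‖ξ‖ ‖(1 : ℂ) - ξ‖) 1
    have h2 := min_le_right ‖ξ‖ ‖(1 : ℂ) - ξ‖
    rw [hδdef]; linarith
  have h2δ1 : 2 * δ ≤ 1 := by
    have h1 := min_le_right (min ‖ξ‖ ‖(1 : ℂ) - ξ‖) 1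
    rw [hδdef]; linarith
  set ε₀ : ℝ := δ / 2 with hε₀def
  have hε₀pos : 0 < ε₀ := by rw [hε₀def]; linarith
  set Kc : ℝ := ‖α - c‖ with hKcdef
  have hKc : 1 ≤ Kc := by rw [hKcdef, norm_sub_rev]; exact hcα
  set εs : ℝ := min (ε₀ / (2 * Kc)) (1 / 2) with hεsdef
  have hεspos : 0 < εs := by
    rw [hεsdef]
    apply lt_min (by positivity) (by norm_num)
  have hεs_half : εs ≤ 1 / 2 := min_le_right _ _
  have hεs_le : 2 * Kc * εs ≤ ε₀ := by
    have h1 : εs ≤ ε₀ / (2 * Kc) := min_le_left _ _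
    have h2 : 0 < 2 * Kc := by linarith
    calc 2 * Kc * εs ≤ 2 * Kc * (ε₀ / (2 * Kc)) := by nlinarith
      _ = ε₀ := by field_simp
  set M : ℝ := ‖ξ‖ + 1 + ε₀ with hMdef
  have hMpos : 0 < M := by
    have := norm_nonneg ξ
    rw [hMdef]; linarith
  -- normalized sequences
  set R : ℕ → ℂ := fun m => A m - c * B m with hRdef
  set x : ℕ → ℂ := fun m => (A m - α * B m) / R m with hxdef
  set l : ℕ → ℂ := fun m => if m % 2 = 1 then 0 else ξ with hldef
  have hl1 : ∀ k, 2 * δ ≤ ‖(1 : ℂ) - l k‖ := by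
    intro k
    by_cases h : k % 2 = 1
    · simp only [hldef, if_pos h, sub_zero, norm_one]
      linarith
    · simp only [hldef, if_neg h]
      exact h2δ1ξ
  have hl2 : ∀ m, 2 * δ ≤ ‖l (m + 1) - l m‖ := by
    intro m
    by_cases h : m % 2 = 1
    · have h1 : ¬((m + 1) % 2 = 1) := by omega
      simp only [hldef, if_pos h, if_neg h1, sub_zero]
      exact h2δξ
    · have h1 : (m + 1) % 2 = 1 := by omega
      simp only [hldef, if_pos h1, if_neg h, zero_sub, norm_neg]
      exact h2δξ
  have hlnorm : ∀ m, ‖l m‖ ≤ ‖ξ‖ := by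
    intro m
    by_cases h : m % 2 = 1
    · simp only [hldef, if_pos h, norm_zero]
      exact norm_nonneg ξ
    · simp only [hldef, if_neg h]
      exact le_refl _
  -- x in terms of the classical approximant
  have hBs : ∀ m, B m ≠ 0 → B m * (A m / B m) = A m := by
    intro m hBm
    rw [mul_comm]
    exact div_mul_cancel₀ _ hBm
  have hxf : ∀ m, B m ≠ 0 → A m / B m - c ≠ 0 →
      x m = (A m / B m - α) / (A m / B m - c) := by
    intro m hBm hsc
    simp only [hxdef, hRdef]
    rw [← mul_div_mul_left (A m / B m - α) (A m / B m - c) hBm]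
    congr 1
    · rw [mul_sub, hBs m hBm]; ring
    · rw [mul_sub, hBs m hBm]; ring
  -- convergence bounds
  obtain ⟨N1, hN1⟩ := Metric.tendsto_atTop.mp heven εs hεspos
  obtain ⟨N2, hN2⟩ := Metric.tendsto_atTop.mp hodd εs hεspos
  set N0 : ℕ := 2 * (N1 + N2) + 2 with hN0def
  have hstruct : ∀ m, N0 ≤ m → R m ≠ 0 ∧ ‖x m‖ ≤ M ∧ (B m = 0 → x m = 1) ∧
      (B m ≠ 0 → ‖x m - l m‖ ≤ ε₀) := by
    intro m hm
    by_cases hBm : B m = 0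
    · have hAm := hABne m hBm
      have hRm : R m = A m := by simp only [hRdef, hBm]; ring
      have hxm : x m = 1 := by
        simp only [hxdef, hRm, hBm]
        rw [mul_zero, sub_zero, div_self hAm]
      refine ⟨by rw [hRm]; exact hAm, ?_, fun _ => hxm, fun h => absurd hBm h⟩
      rw [hxm, norm_one, hMdef]
      have := norm_nonneg ξ
      linarith
    · -- regular case
      set L : ℂ := if m % 2 = 1 then α else β with hLdef
      have hcL : 1 ≤ ‖c - L‖ := by
        by_cases h : m % 2 = 1
        · simp only [hLdef, if_pos h]; exact hcα
        · simp only [hLdef, if_neg h]; exact hcβ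
      have hsL : ‖A m / B m - L‖ ≤ εs := by
        by_cases h : m % 2 = 1
        · obtain ⟨k, hk⟩ : ∃ k, m = 2 * k + 1 := ⟨m / 2, by omega⟩
          have hkN : N1 ≤ k := by omega
          have hd : dist (A (2 * k + 1) / B (2 * k + 1)) α < εs := hN1 k hkN
          rw [dist_eq_norm] at hd
          simp only [hLdef, if_pos h]
          rw [hk]
          exact le_of_lt hd
        · obtain ⟨k, hk⟩ : ∃ k, m = 2 * k + 2 := ⟨(m - 2) / 2, by omega⟩
          have hkN : N2 ≤ k := by omega
          have hd : dist (A (2 * k + 2) / B (2 * k + 2)) β < εs := hN2 k hkN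
          rw [dist_eq_norm] at hd
          simp only [hLdef, if_neg h]
          rw [hk]
          exact le_of_lt hd
      have hlL : l m = (L - α) / (L - c) := by
        by_cases h : m % 2 = 1
        · simp only [hldef, hLdef, if_pos h, sub_self, zero_div]
        · simp only [hldef, hLdef, if_neg h, hξdef]
      have hLc : L - c ≠ 0 := by
        intro h0
        rw [show c - L = -(L - c) by ring, h0] at hcL
        simp at hcL; linarith
      have hscn : 1 / 2 ≤ ‖A m / B m - c‖ := by
        have htri : ‖c - L‖ ≤ ‖c - A m / B m‖ + ‖A m / B m - L‖ := by
          calc ‖c - L‖ = ‖(c - A m / B m) + (A m / B m - L)‖ := by ring_nf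
            _ ≤ ‖c - A m / B m‖ + ‖A m / B m - L‖ := norm_add_le _ _
        rw [norm_sub_rev]
        linarith
      have hsc : A m / B m - c ≠ 0 := by
        intro h0
        rw [h0, norm_zero] at hscn
        linarith
      have hxm := hxf m hBm hsc
      have hRm : R m = B m * (A m / B m - c) := by
        simp only [hRdef]
        rw [mul_sub, hBs m hBm]
        ring
      have hRne : R m ≠ 0 := by rw [hRm]; exact mul_ne_zero hBm hsc
      have hxdist : x m - l m =
          ((α - c) * (A m / B m - L)) / ((A m / B m - c) * (L - c)) := by
        rw [hxm, hlL, div_sub_div _ _ hsc hLc,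
          div_eq_div_iff (mul_ne_zero hsc hLc) (mul_ne_zero hsc hLc)]
        ring
      have hbound : ‖x m - l m‖ ≤ ε₀ := by
        rw [hxdist, norm_div, norm_mul, norm_mul]
        have hnum : ‖α - c‖ * ‖A m / B m - L‖ ≤ Kc * εs := by
          rw [hKcdef]
          exact mul_le_mul_of_nonneg_left hsL (norm_nonneg _)
        have hden : 1 / 2 * 1 ≤ ‖A m / B m - c‖ * ‖L - c‖ := by
          have h2 : 1 ≤ ‖L - c‖ := by rw [norm_sub_rev]; exact hcL
          have := norm_nonneg (A m / B m - c)
          nlinarith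
        calc ‖α - c‖ * ‖A m / B m - L‖ / (‖A m / B m - c‖ * ‖L - c‖)
            ≤ (Kc * εs) / (1 / 2 * 1) := by
              apply div_le_div₀ (by positivity) hnum (by norm_num) hden
          _ = 2 * Kc * εs := by ring
          _ ≤ ε₀ := hεs_le
      refine ⟨hRne, ?_, fun h => absurd h hBm, fun _ => hbound⟩
      have h1 : ‖x m‖ ≤ ‖x m - l m‖ + ‖l m‖ := by
        calc ‖x m‖ = ‖(x m - l m) + l m‖ := by ring_nf
          _ ≤ ‖x m - l m‖ + ‖l m‖ := norm_add_le _ _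
      have := hlnorm m
      rw [hMdef]
      linarith
  have hadj : ∀ m, N0 ≤ m → δ ≤ ‖x (m + 1) - x m‖ := by
    intro m hm
    obtain ⟨_, _, hj, hr⟩ := hstruct m hm
    obtain ⟨_, _, hj1, hr1⟩ := hstruct (m + 1) (by omega)
    by_cases hBm : B m = 0
    · have hx1 : x m = 1 := hj hBm
      have hBm1 : B (m + 1) ≠ 0 := hBB m hBm
      have hq := hr1 hBm1
      have h1 := hl1 (m + 1)
      have htri : ‖(1 : ℂ) - l (m + 1)‖ ≤ ‖x (m + 1) - 1‖ + ‖x (m + 1) - l (m + 1)‖ := by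
        calc ‖(1 : ℂ) - l (m + 1)‖ = ‖-((x (m + 1) - 1)) + (x (m + 1) - l (m + 1))‖ := by
              ring_nf
          _ ≤ ‖-(x (m + 1) - 1)‖ + ‖x (m + 1) - l (m + 1)‖ := norm_add_le _ _
          _ = ‖x (m + 1) - 1‖ + ‖x (m + 1) - l (m + 1)‖ := by rw [norm_neg]
      rw [hx1]
      rw [hε₀def] at hq
      linarith
    · by_cases hBm1 : B (m + 1) = 0
      · have hx1 : x (m + 1) = 1 := hj1 hBm1
        have hq := hr hBm
        have h1 := hl1 m
        have htri : ‖(1 : ℂ) - l m‖ ≤ ‖(1 : ℂ) - x m‖ + ‖x m - l m‖ := by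
          calc ‖(1 : ℂ) - l m‖ = ‖((1 : ℂ) - x m) + (x m - l m)‖ := by ring_nf
            _ ≤ ‖(1 : ℂ) - x m‖ + ‖x m - l m‖ := norm_add_le _ _
        rw [hx1]
        rw [hε₀def] at hq
        linarith
      · have hq := hr hBm
        have hq1 := hr1 hBm1
        have h2 := hl2 m
        have htri : ‖l (m + 1) - l m‖ ≤
            ‖x (m + 1) - l (m + 1)‖ + (‖x (m + 1) - x m‖ + ‖x m - l m‖) := by
          calc ‖l (m + 1) - l m‖
              = ‖-(x (m + 1) - l (m + 1)) + ((x (m + 1) - x m) + (x m - l m))‖ := by ring_nf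
            _ ≤ ‖-(x (m + 1) - l (m + 1))‖ + ‖(x (m + 1) - x m) + (x m - l m)‖ :=
                norm_add_le _ _
            _ ≤ ‖x (m + 1) - l (m + 1)‖ + (‖x (m + 1) - x m‖ + ‖x m - l m‖) := by
                rw [norm_neg]
                exact add_le_add_right (norm_add_le _ _) _
        rw [hε₀def] at hq hq1
        linarith
  -- the key algebraic identity
  have hkey : ∀ m, R m ≠ 0 → R (m + 1) ≠ 0 → R (m + 2) ≠ 0 → R (m + 3) ≠ 0 →
      a (m + 2) * ((x (m + 3) - x (m + 1)) * (x (m + 2) - x m)) =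
      -((x (m + 3) - x (m + 2)) * (x (m + 1) - x m)) := by
    intro m h0 h1 h2 h3
    have e3A : A (m + 3) = A (m + 2) + a (m + 2) * A (m + 1) := hA (m + 1)
    have e3B : B (m + 3) = B (m + 2) + a (m + 2) * B (m + 1) := hB (m + 1)
    have e2A : A (m + 2) = A (m + 1) + a (m + 1) * A m := hA m
    have e2B : B (m + 2) = B (m + 1) + a (m + 1) * B m := hB m
    have hR3 : R (m + 3) = A (m + 3) - c * B (m + 3) := by simp only [hRdef]
    have hR2 : R (m + 2) = A (m + 2) - c * B (m + 2) := by simp only [hRdef]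
    have hR1 : R (m + 1) = A (m + 1) - c * B (m + 1) := by simp only [hRdef]
    have hR0 : R m = A m - c * B m := by simp only [hRdef]
    simp only [hxdef]
    rw [div_sub_div _ _ h3 h1, div_sub_div _ _ h2 h0, div_mul_div_comm,
      div_sub_div _ _ h3 h2, div_sub_div _ _ h1 h0, div_mul_div_comm,
      ← mul_div_assoc, ← neg_div,
      div_eq_div_iff (mul_ne_zero (mul_ne_zero h3 h1) (mul_ne_zero h2 h0))
        (mul_ne_zero (mul_ne_zero h3 h2) (mul_ne_zero h1 h0))]
    rw [hR3, hR2, hR1, hR0, e3A, e3B, e2A, e2B]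
    ring
  -- a limit that is frequently attained as 0 must be 0
  have hzero : ∀ (f : ℕ → ℂ) (L : ℂ), Tendsto f atTop (𝓝 L) →
      (∃ᶠ n in atTop, f n = 0) → L = 0 := by
    intro f L hf hfreq
    by_contra hL
    have h1 : ∀ᶠ n in atTop, f n ∈ Metric.ball L ‖L‖ :=
      hf (Metric.ball_mem_nhds L (norm_pos_iff.mpr hL))
    obtain ⟨n, hn0, hball⟩ := (hfreq.and_eventually h1).exists
    rw [hn0, Metric.mem_ball, dist_zero_left] at hball
    exact lt_irrefl _ hball
  -- at least one parity class is eventually junk-free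
  have hcase : (∀ᶠ n in atTop, B (2 * n + 1) ≠ 0) ∨ (∀ᶠ n in atTop, B (2 * n + 2) ≠ 0) := by
    by_contra hcon
    push_neg at hcon
    obtain ⟨h1, h2⟩ := hcon
    have hα0 : α = 0 := by
      refine hzero _ _ heven (h1.mono fun n hn => ?_)
      simp [hn]
    have hβ0 : β = 0 := by
      refine hzero _ _ hodd (h2.mono fun n hn => ?_)
      simp [hn]
    exact hαβ (hα0.trans hβ0.symm)
  -- on the junk-free parity, consecutive same-parity differences of x tend to 0
  have hdiff : Tendsto (fun n => x (2 * n + 3) - x (2 * n + 1)) atTop (𝓝 0) ∨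
      Tendsto (fun n => x (2 * n + 4) - x (2 * n + 2)) atTop (𝓝 0) := by
    rcases hcase with hfree | hfree
    · left
      have hscne : ∀ᶠ n in atTop, A (2 * n + 1) / B (2 * n + 1) - c ≠ 0 := by
        have h2 : ∀ᶠ n in atTop, dist (A (2 * n + 1) / B (2 * n + 1)) α < 1 / 2 := by
          obtain ⟨N, hN⟩ := Metric.tendsto_atTop.mp heven (1 / 2) (by norm_num)
          exact eventually_atTop.mpr ⟨N, hN⟩
        filter_upwards [h2] with n hn h0
        rw [sub_eq_zero] at h0
        rw [h0, dist_eq_norm] at hn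
        linarith
      have hXeq : (fun n => (A (2 * n + 1) / B (2 * n + 1) - α) /
          (A (2 * n + 1) / B (2 * n + 1) - c)) =ᶠ[atTop] fun n => x (2 * n + 1) := by
        filter_upwards [hfree, hscne] with n h1 h2
        exact (hxf _ h1 h2).symm
      have hlim := Tendsto.div (heven.sub_const α) (heven.sub_const c) hαc
      rw [sub_self, zero_div] at hlim
      have hX : Tendsto (fun n => x (2 * n + 1)) atTop (𝓝 0) := hlim.congr' hXeq
      have hX3 : Tendsto (fun n => x (2 * n + 3)) atTop (𝓝 0) := by
        have h := hX.comp (tendsto_add_atTop_nat 1)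
        have heq : ((fun n => x (2 * n + 1)) ∘ (· + 1)) = fun n => x (2 * n + 3) := by
          funext n
          simp only [Function.comp]
          congr 1
        rwa [heq] at h
      simpa using hX3.sub hX
    · right
      have hscne : ∀ᶠ n in atTop, A (2 * n + 2) / B (2 * n + 2) - c ≠ 0 := by
        have h2 : ∀ᶠ n in atTop, dist (A (2 * n + 2) / B (2 * n + 2)) β < 1 / 2 := by
          obtain ⟨N, hN⟩ := Metric.tendsto_atTop.mp hodd (1 / 2) (by norm_num)
          exact eventually_atTop.mpr ⟨N, hN⟩
        filter_upwards [h2] with n hn h0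
        rw [sub_eq_zero] at h0
        rw [h0, dist_eq_norm] at hn
        linarith
      have hXeq : (fun n => (A (2 * n + 2) / B (2 * n + 2) - α) /
          (A (2 * n + 2) / B (2 * n + 2) - c)) =ᶠ[atTop] fun n => x (2 * n + 2) := by
        filter_upwards [hfree, hscne] with n h1 h2
        exact (hxf _ h1 h2).symm
      have hlim := Tendsto.div (hodd.sub_const α) (hodd.sub_const c) hβc
      have hX : Tendsto (fun n => x (2 * n + 2)) atTop (𝓝 ξ) := hlim.congr' hXeq
      have hX4 : Tendsto (fun n => x (2 * n + 4)) atTop (𝓝 ξ) := by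
        have h := hX.comp (tendsto_add_atTop_nat 1)
        have heq : ((fun n => x (2 * n + 2)) ∘ (· + 1)) = fun n => x (2 * n + 4) := by
          funext n
          simp only [Function.comp]
          congr 1
        rwa [heq] at h
      simpa using hX4.sub hX
  -- hence eventually one of the two same-parity differences is small
  have hsmall : ∀ η : ℝ, 0 < η → ∀ᶠ m in atTop,
      ‖x (m + 3) - x (m + 1)‖ ≤ η ∨ ‖x (m + 2) - x m‖ ≤ η := by
    intro η hη
    rcases hdiff with h | h
    · obtain ⟨N, hN⟩ := Metric.tendsto_atTop.mp h η hη
      refine eventually_atTop.mpr ⟨2 * N + 2, fun m hm => ?_⟩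
      by_cases hp : m % 2 = 1
      · right
        have hd := hN ((m - 1) / 2) (by omega)
        rw [dist_zero_right] at hd
        rw [show 2 * ((m - 1) / 2) + 3 = m + 2 by omega,
          show 2 * ((m - 1) / 2) + 1 = m by omega] at hd
        exact le_of_lt hd
      · left
        have hd := hN (m / 2) (by omega)
        rw [dist_zero_right] at hd
        rw [show 2 * (m / 2) + 3 = m + 3 by omega,
          show 2 * (m / 2) + 1 = m + 1 by omega] at hd
        exact le_of_lt hd
    · obtain ⟨N, hN⟩ := Metric.tendsto_atTop.mp h η hη
      refine eventually_atTop.mpr ⟨2 * N + 2, fun m hm => ?_⟩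
      by_cases hp : m % 2 = 1
      · left
        have hd := hN ((m - 1) / 2) (by omega)
        rw [dist_zero_right] at hd
        rw [show 2 * ((m - 1) / 2) + 4 = m + 3 by omega,
          show 2 * ((m - 1) / 2) + 2 = m + 1 by omega] at hd
        exact le_of_lt hd
      · right
        have hd := hN ((m - 2) / 2) (by omega)
        rw [dist_zero_right] at hd
        rw [show 2 * ((m - 2) / 2) + 4 = m + 2 by omega,
          show 2 * ((m - 2) / 2) + 2 = m by omega] at hd
        exact le_of_lt hd
  -- final assembly
  rw [tendsto_atTop]
  intro C
  set C' : ℝ := max C 1 with hC'def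
  have hC'pos : (0 : ℝ) < C' := lt_of_lt_of_le one_pos (le_max_right _ _)
  have hCC' : C ≤ C' := le_max_left _ _
  set η : ℝ := δ * δ / (2 * M * C') with hηdef
  have hηpos : 0 < η := by
    rw [hηdef]
    exact div_pos (mul_pos hδpos hδpos) (mul_pos (mul_pos two_pos hMpos) hC'pos)
  have hMne : M ≠ 0 := ne_of_gt hMpos
  have hC'ne : C' ≠ 0 := ne_of_gt hC'pos
  have h2M0 : (2 : ℝ) * M ≠ 0 := mul_ne_zero two_ne_zero hMne
  have h2Mη : 2 * M * η = δ * δ / C' := by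
    rw [hηdef]
    calc 2 * M * (δ * δ / (2 * M * C')) = 2 * M / (2 * M * C') * (δ * δ) := by ring
      _ = 2 * M / (2 * M) / C' * (δ * δ) := by rw [← div_div]
      _ = 1 / C' * (δ * δ) := by rw [div_self h2M0]
      _ = δ * δ / C' := by ring
  have hmain : ∀ᶠ m in atTop, C ≤ ‖a (m + 2)‖ := by
    filter_upwards [hsmall η hηpos, eventually_ge_atTop N0] with m hdisj hm
    obtain ⟨hR0, hx0, -, -⟩ := hstruct m hm
    obtain ⟨hR1, hx1, -, -⟩ := hstruct (m + 1) (by omega)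
    obtain ⟨hR2, hx2, -, -⟩ := hstruct (m + 2) (by omega)
    obtain ⟨hR3, hx3, -, -⟩ := hstruct (m + 3) (by omega)
    have hid := hkey m hR0 hR1 hR2 hR3
    have hnorm : ‖a (m + 2)‖ * (‖x (m + 3) - x (m + 1)‖ * ‖x (m + 2) - x m‖) =
        ‖x (m + 3) - x (m + 2)‖ * ‖x (m + 1) - x m‖ := by
      rw [← norm_mul, ← norm_mul, hid, norm_neg, norm_mul]
    have hlow1 := hadj (m + 2) (by omega)
    have hlow0 := hadj m hm
    have hup1 : ‖x (m + 3) - x (m + 1)‖ ≤ 2 * M := by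
      calc ‖x (m + 3) - x (m + 1)‖ ≤ ‖x (m + 3)‖ + ‖x (m + 1)‖ := norm_sub_le _ _
        _ ≤ 2 * M := by linarith
    have hup0 : ‖x (m + 2) - x m‖ ≤ 2 * M := by
      calc ‖x (m + 2) - x m‖ ≤ ‖x (m + 2)‖ + ‖x m‖ := norm_sub_le _ _
        _ ≤ 2 * M := by linarith
    have hprod : ‖x (m + 3) - x (m + 1)‖ * ‖x (m + 2) - x m‖ ≤ 2 * M * η := by
      rcases hdisj with h | h
      · calc ‖x (m + 3) - x (m + 1)‖ * ‖x (m + 2) - x m‖ ≤ η * (2 * M) :=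
              mul_le_mul h hup0 (norm_nonneg _) (le_of_lt hηpos)
          _ = 2 * M * η := by ring
      · exact mul_le_mul hup1 h (norm_nonneg _) (by linarith)
    have hfinal : δ * δ ≤ ‖a (m + 2)‖ * (2 * M * η) := by
      calc δ * δ ≤ ‖x (m + 3) - x (m + 2)‖ * ‖x (m + 1) - x m‖ :=
            mul_le_mul hlow1 hlow0 (le_of_lt hδpos) (norm_nonneg _)
        _ = ‖a (m + 2)‖ * (‖x (m + 3) - x (m + 1)‖ * ‖x (m + 2) - x m‖) := hnorm.symm
        _ ≤ ‖a (m + 2)‖ * (2 * M * η) := mul_le_mul_of_nonneg_left hprod (norm_nonneg _)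
    rw [h2Mη] at hfinal
    have hre : ‖a (m + 2)‖ * (δ * δ / C') = ‖a (m + 2)‖ * (δ * δ) / C' :=
      (mul_div_assoc _ _ _).symm
    rw [hre] at hfinal
    have hδδ : 0 < δ * δ := mul_pos hδpos hδpos
    have hs := (le_div_iff₀ hC'pos).mp hfinal
    rw [mul_comm (δ * δ) C'] at hs
    have hgoal : C' ≤ ‖a (m + 2)‖ := le_of_mul_le_mul_right hs hδδ
    linarith
  obtain ⟨N, hN⟩ := eventually_atTop.mp hmain
  refine eventually_atTop.mpr ⟨N + 2, fun n hn => ?_⟩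
  have h := hN (n - 2) (by omega)
  rwa [show n - 2 + 2 = n by omega] at h
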